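/- Suppose n×n symmetric positive semidefinite matrices e, E satisfy: tr(e) ≥ β₁p² for some p > 0 and β₁ > 0; ‖e‖ = tr(e) and ‖E‖ ≤ tr(E) (Frobenius norm); |(E_{23})² − E_{22}E_{33}| ≥ c r² for some c, r > 0; and the bound (from the previous inequality) √(1 − cos θ_{e,E})·‖E‖ ≥ c' r²/(1 + tr(E)/tr(e)) for some c' > 0. If additionally tr(e), tr(E) ≤ B, then (tr(e)·tr(E) − tr(eE))/tr(e)² ≥ C p² r⁴ where C > 0 depends only on c', β₁, B. -/

import Mathlib

open Matrix

noncomputable def frob {n : ℕ} (M : Matrix (Fin n) (Fin n) ℝ) : ℝ :=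
  Real.sqrt (∑ i, ∑ j, (M i j) ^ 2)

lemma diag_nn {n : ℕ} {M : Matrix (Fin n) (Fin n) ℝ} (h : M.PosSemidef) (i : Fin n) :
    0 ≤ M i i := by
  exact h.diag_nonneg

lemma trace_nn {n : ℕ} {M : Matrix (Fin n) (Fin n) ℝ} (h : M.PosSemidef) :
    0 ≤ M.trace := by
  rw [Matrix.trace]
  exact Finset.sum_nonneg fun i _ => diag_nn h i

open scoped MatrixOrder in
lemma trace_mul_nn {n : ℕ} {e E : Matrix (Fin n) (Fin n) ℝ} (he : e.PosSemidef)
    (hE : E.PosSemidef) : 0 ≤ (e * E).trace := by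
  have hs := (CFC.sqrt_nonneg E).posSemidef
  have h1 : e * E = e * (CFC.sqrt E * CFC.sqrt E) := by rw [CFC.sqrt_mul_sqrt_self E hE.nonneg]
  rw [h1, ← mul_assoc, Matrix.trace_mul_cycle]
  have h2 : CFC.sqrt E * e * CFC.sqrt E = (CFC.sqrt E)ᴴ * e * CFC.sqrt E := by
    rw [hs.isHermitian.eq]
  rw [h2]
  exact trace_nn (he.conjTranspose_mul_mul_same _)

lemma frob_nn {n : ℕ} (M : Matrix (Fin n) (Fin n) ℝ) : 0 ≤ frob M := Real.sqrt_nonneg _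

lemma frob_sq {n : ℕ} (M : Matrix (Fin n) (Fin n) ℝ) :
    (frob M) ^ 2 = ∑ i, ∑ j, (M i j) ^ 2 := by
  rw [frob, Real.sq_sqrt]
  exact Finset.sum_nonneg fun i _ => Finset.sum_nonneg fun j _ => sq_nonneg _

lemma trace_CS {n : ℕ} {e E : Matrix (Fin n) (Fin n) ℝ} (he : e.PosSemidef)
    (hE : E.PosSemidef) : (e * E).trace ≤ frob e * frob E := by
  have hsym : ∀ a b, E b a = E a b := by
    intro a b
    have h := hE.isHermitian
    rw [Matrix.IsHermitian] at h
    calc E b a = Eᵀ a b := rfl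
      _ = E a b := by rw [← Matrix.conjTranspose_eq_transpose_of_trivial, h]
  have htr : (e * E).trace = ∑ q : Fin n × Fin n, e q.1 q.2 * E q.1 q.2 := by
    rw [Matrix.trace]
    simp only [Matrix.diag, Matrix.mul_apply]
    rw [Fintype.sum_prod_type]
    refine Finset.sum_congr rfl fun a _ => Finset.sum_congr rfl fun b _ => ?_
    rw [hsym]
  have hcs := Finset.sum_mul_sq_le_sq_mul_sq Finset.univ (fun q : Fin n × Fin n => e q.1 q.2)
    (fun q => E q.1 q.2)
  have hfe : (frob e)^2 = ∑ q : Fin n × Fin n, (e q.1 q.2)^2 := by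
    rw [frob_sq, Fintype.sum_prod_type]
  have hfE : (frob E)^2 = ∑ q : Fin n × Fin n, (E q.1 q.2)^2 := by
    rw [frob_sq, Fintype.sum_prod_type]
  have h2 : (e * E).trace ^ 2 ≤ (frob e * frob E) ^ 2 := by
    rw [htr, mul_pow, hfe, hfE]; exact hcs
  have h3 : 0 ≤ (e * E).trace := trace_mul_nn he hE
  have h4 : 0 ≤ frob e * frob E := mul_nonneg (frob_nn _) (frob_nn _)
  nlinarith [h2, h3, h4]

set_option maxHeartbeats 1000000 in
lemma arith_main (c' β₁ B t T F τ p r : ℝ) (hc' : 0 < c') (hβ₁ : 0 < β₁) (hB : 0 < B)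
    (hp : 0 < p) (hr : 0 < r) (hte : β₁ * p ^ 2 ≤ t) (hfE : F ≤ T) (hT0 : 0 ≤ T)
    (hF0 : 0 ≤ F) (hτ0 : 0 ≤ τ) (hCS : τ ≤ t * F)
    (hchain : c' * r ^ 2 / (1 + T / t) ≤ Real.sqrt (1 - τ / (t * F)) * F)
    (htB : t ≤ B) (hTB : T ≤ B) :
    c' ^ 2 * β₁ / (4 * B ^ 3) * p ^ 2 * r ^ 4 ≤ (t * T - τ) / t ^ 2 := by
  have ht : 0 < t := lt_of_lt_of_le (by positivity) hte
  have hL0 : 0 < c' * r ^ 2 / (1 + T / t) := by positivity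
  have hFpos : 0 < F := by
    rcases hF0.lt_or_eq with h | h
    · exact h
    · exfalso; rw [← h, mul_zero] at hchain; linarith
  have hT : 0 < T := lt_of_lt_of_le hFpos hfE
  have hs0 : 0 ≤ 1 - τ / (t * F) := by
    rw [sub_nonneg]
    exact div_le_one_of_le₀ hCS (by positivity)
  have h1 : (c' * r ^ 2 / (1 + T / t)) ^ 2 ≤ (1 - τ / (t * F)) * F ^ 2 := by
    calc (c' * r ^ 2 / (1 + T / t)) ^ 2
        ≤ (Real.sqrt (1 - τ / (t * F)) * F) ^ 2 := pow_le_pow_left₀ hL0.le hchain 2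
      _ = (1 - τ / (t * F)) * F ^ 2 := by rw [mul_pow, Real.sq_sqrt hs0]
  have hτt : τ / t ≤ F := by rw [div_le_iff₀ ht]; linarith [hCS]
  have h2 : (1 - τ / (t * F)) * F ^ 2 ≤ B * (t * T - τ) / t := by
    have e1 : (1 - τ / (t * F)) * F ^ 2 = F * (F - τ / t) := by
      field_simp
    have e2 : B * (t * T - τ) / t = B * (T - τ / t) := by
      rw [div_eq_iff ht.ne']
      field_simp
    rw [e1, e2]
    have hFτ : 0 ≤ F - τ / t := by linarith
    have : F * (F - τ / t) ≤ B * (T - τ / t) :=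
      mul_le_mul (le_trans hfE hTB) (by linarith) hFτ hB.le
    linarith
  have hX0 : 0 ≤ t * T - τ := by nlinarith [hCS, mul_le_mul_of_nonneg_left hfE ht.le]
  have h3 : (c' * r ^ 2) ^ 2 * t ^ 3 ≤ B * (t * T - τ) * (t + T) ^ 2 := by
    have e1 : (c' * r ^ 2 / (1 + T / t)) ^ 2 = (c' * r ^ 2) ^ 2 * t ^ 2 / (t + T) ^ 2 := by
      field_simp
    have h12 : (c' * r ^ 2) ^ 2 * t ^ 2 / (t + T) ^ 2 ≤ B * (t * T - τ) / t := by
      rw [← e1]; exact le_trans h1 h2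
    rw [div_le_div_iff₀ (by positivity) ht] at h12
    nlinarith [h12]
  have h5 : B * (t * T - τ) * (t + T) ^ 2 ≤ 4 * B ^ 3 * (t * T - τ) := by
    have hsq : (t + T) ^ 2 ≤ 4 * B ^ 2 := by nlinarith
    nlinarith [mul_nonneg (mul_nonneg hB.le hX0) (sub_nonneg.2 hsq)]
  have h6 : c' ^ 2 * β₁ * p ^ 2 * r ^ 4 * t ^ 2 ≤ (c' * r ^ 2) ^ 2 * t ^ 3 := by
    nlinarith [mul_nonneg (mul_nonneg (sq_nonneg (c' * r ^ 2)) (sq_nonneg t))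
      (sub_nonneg.2 hte)]
  have hgoal : c' ^ 2 * β₁ / (4 * B ^ 3) * p ^ 2 * r ^ 4
      = c' ^ 2 * β₁ * p ^ 2 * r ^ 4 / (4 * B ^ 3) := by ring
  rw [hgoal, div_le_div_iff₀ (by positivity) (by positivity)]
  nlinarith [h3, h5, h6]

/-- Chaining of inequalities in the proof of Theorem 2.6: under the stated bounds on
the PSD matrices `e, E` one gets the quantitative positivity
`(tr(e)tr(E) − tr(eE))/tr(e)² ≥ C p² r⁴` with `C` depending only on `c'`, `β₁`, `B`. -/
theorem stmt18 (c' β₁ B : ℝ) (hc' : 0 < c') (hβ₁ : 0 < β₁) (hB : 0 < B) :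
    ∃ C : ℝ, 0 < C ∧
      ∀ (n : ℕ) (i j : Fin n) (p r c : ℝ) (e E : Matrix (Fin n) (Fin n) ℝ),
        0 < p → 0 < r → 0 < c →
        e.PosSemidef → E.PosSemidef →
        β₁ * p ^ 2 ≤ e.trace →
        frob e = e.trace → frob E ≤ E.trace →
        c * r ^ 2 ≤ |(E i j) ^ 2 - E i i * E j j| →
        c' * r ^ 2 / (1 + E.trace / e.trace) ≤
          Real.sqrt (1 - (e * E).trace / (frob e * frob E)) * frob E →
        e.trace ≤ B → E.trace ≤ B →
        C * p ^ 2 * r ^ 4 ≤ (e.trace * E.trace - (e * E).trace) / e.trace ^ 2 := by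
  refine ⟨c' ^ 2 * β₁ / (4 * B ^ 3), by positivity, ?_⟩
  intro n i j p r c e E hp hr hc he hE hte hfe hfE _ hchain htB hTB
  have hCS : (e * E).trace ≤ e.trace * frob E := by
    have := trace_CS he hE
    rwa [hfe] at this
  rw [hfe] at hchain
  exact arith_main c' β₁ B e.trace E.trace (frob E) ((e * E).trace) p r hc' hβ₁ hB hp hr
    hte hfE (trace_nn hE) (frob_nn E) (trace_mul_nn he hE) hCS hchain htB hTB
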